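/- Let $\gamma, \delta \in (0,1)$. Then the equation $\frac{1 - \gamma x}{\gamma(e^x - 1)} = \frac{1-\delta}{\delta}$ has a unique solution $x$ in the interval $(0, 1/\gamma)$, given by $x = \frac{1}{\gamma} + \frac{1}{\delta} - 1 - W_0\left(\frac{(1-\delta)}{\delta} e^{\frac{1}{\gamma} + \frac{1}{\delta} - 1}\right)$, where $W_0$ is the principal branch of the Lambert W function. -/

import Mathlib

/-- the optimality equation `(1-γx)/(γ(eˣ-1)) = (1-δ)/δ` has a unique
solution in `(0, 1/γ)`, given in closed form via the principal branch of the Lambert W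
function: the solution `x` satisfies `x = 1/γ + 1/δ - 1 - W₀((1-δ)/δ · e^{1/γ+1/δ-1})`,
i.e. `u := 1/γ + 1/δ - 1 - x` is nonnegative and satisfies
`u·eᵘ = (1-δ)/δ · e^{1/γ+1/δ-1}`. -/
theorem stmt_18 (γ δ : ℝ) (hγ : γ ∈ Set.Ioo (0:ℝ) 1) (hδ : δ ∈ Set.Ioo (0:ℝ) 1) :
    ∃! x : ℝ, x ∈ Set.Ioo 0 (1 / γ) ∧
      (1 - γ * x) / (γ * (Real.exp x - 1)) = (1 - δ) / δ ∧
      0 ≤ 1 / γ + 1 / δ - 1 - x ∧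
      (1 / γ + 1 / δ - 1 - x) * Real.exp (1 / γ + 1 / δ - 1 - x)
        = (1 - δ) / δ * Real.exp (1 / γ + 1 / δ - 1) := by
  obtain ⟨hγ0, hγ1⟩ := hγ
  obtain ⟨hδ0, hδ1⟩ := hδ
  set c : ℝ := (1 - δ) / δ with hc
  have hc0 : 0 < c := div_pos (by linarith) hδ0
  set F : ℝ → ℝ := fun x => c * γ * (Real.exp x - 1) + γ * x - 1 with hF
  have hmono : StrictMono F := by
    intro a b hab
    have h1 : Real.exp a < Real.exp b := Real.exp_lt_exp.2 hab
    have h2 : 0 < c * γ := mul_pos hc0 hγ0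
    simp only [hF]
    nlinarith
  have hcont : Continuous F := by
    simp only [hF]
    continuity
  have hγinv : (0:ℝ) < 1 / γ := by positivity
  have hF0 : F 0 = -1 := by simp [hF]
  have hFb : 0 < F (1 / γ) := by
    have h1 : 1 < Real.exp (1 / γ) := by
      nlinarith [Real.add_one_le_exp (1 / γ)]
    have : γ * (1 / γ) = 1 := by field_simp
    simp only [hF, this]
    nlinarith [mul_pos hc0 hγ0]
  -- existence of a root
  have hiv := intermediate_value_Ioo (le_of_lt hγinv) hcont.continuousOn
  have h0mem : (0:ℝ) ∈ Set.Ioo (F 0) (F (1 / γ)) := ⟨by rw [hF0]; norm_num, hFb⟩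
  obtain ⟨x, hxmem, hxF⟩ := hiv h0mem
  -- key equivalences
  have hroot : ∀ y ∈ Set.Ioo (0:ℝ) (1 / γ),
      ((1 - γ * y) / (γ * (Real.exp y - 1)) = c ↔ F y = 0) := by
    intro y hy
    have h1 : 1 < Real.exp y := by
      nlinarith [Real.add_one_le_exp y, hy.1]
    have hden : γ * (Real.exp y - 1) ≠ 0 := ne_of_gt (mul_pos hγ0 (by linarith))
    rw [div_eq_iff hden]
    constructor
    · intro h; simp only [hF]; nlinarith
    · intro h; simp only [hF] at h; nlinarith
  refine ⟨x, ⟨hxmem, ?_, ?_, ?_⟩, ?_⟩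
  · exact (hroot x hxmem).2 hxF
  · -- 0 ≤ u: u = c * exp x > 0
    have hkey : 1 / γ + 1 / δ - 1 - x = c * Real.exp x := by
      simp only [hF] at hxF
      have hδne : δ ≠ 0 := ne_of_gt hδ0
      have hγne : γ ≠ 0 := ne_of_gt hγ0
      have hcδ : c * δ = 1 - δ := by rw [hc]; exact div_mul_cancel₀ _ hδne
      field_simp [hc] at hxF ⊢
      linear_combination (-δ) * hxF - γ * hcδ
    rw [hkey]; positivity
  · have hkey : 1 / γ + 1 / δ - 1 - x = c * Real.exp x := by
      simp only [hF] at hxF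
      have hδne : δ ≠ 0 := ne_of_gt hδ0
      have hγne : γ ≠ 0 := ne_of_gt hγ0
      have hcδ : c * δ = 1 - δ := by rw [hc]; exact div_mul_cancel₀ _ hδne
      field_simp [hc] at hxF ⊢
      linear_combination (-δ) * hxF - γ * hcδ
    nth_rewrite 1 [hkey]
    rw [mul_assoc, ← Real.exp_add]
    ring_nf
  · rintro y ⟨hymem, hyeq, -, -⟩
    have hyF : F y = 0 := (hroot y hymem).1 hyeq
    exact hmono.injective (by rw [hyF, hxF])
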